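/- Under the standing assumptions, let t = |ξ(L)| and fix a first-order formula φ(x_1,…,x_p,y) with p ≥ 1. For each n, let s_n ∈ [0,1]^t be the non-increasing rearrangement of the vector of values (⟨φ,(G_n,u)⟩)_{u ∈ ξ(G_n)}, and let s ∈ [0,1]^t be the non-increasing rearrangement of (⟨φ,(L,u)⟩)_{u ∈ ξ(L)}. Then s_n converges to s (coordinatewise, equivalently in the supremum norm on [0,1]^t). -/

import Mathlib

open FirstOrder Language MeasureTheory Filter
open scoped ENNReal

/-- The set of solutions of a formula `φ` in `p` free variables in a graph. -/
def solSet {V : Type} (G : SimpleGraph V) {p : ℕ}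
    (φ : Language.graph.Formula (Fin p)) : Set (Fin p → V) :=
  letI := G.structure
  {v | φ.Realize v}

/-- The set of solutions of a rooted formula `φ(x₁,…,x_p,y)` with the root variable `y`
interpreted as `r`. -/
def solSetR {V : Type} (G : SimpleGraph V) {p : ℕ}
    (φ : Language.graph.Formula (Fin (p + 1))) (r : V) : Set (Fin p → V) :=
  letI := G.structure
  {v | φ.Realize (Fin.snoc v r)}

/-- The set of solutions of a one-variable formula. -/
def sol1 {V : Type} (G : SimpleGraph V) (ξ : Language.graph.Formula (Fin 1)) : Set V :=
  letI := G.structure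
  {v : V | ξ.Realize (fun _ => v)}

/-- Stone pairing `⟨φ,G⟩` of a formula and a finite graph. -/
noncomputable def stoneG {V : Type} (fV : Fintype V) (G : SimpleGraph V) {p : ℕ}
    (φ : Language.graph.Formula (Fin p)) : ℝ :=
  (Nat.card (solSet G φ) : ℝ) / (Fintype.card V : ℝ) ^ p

/-- Rooted Stone pairing `⟨φ,(G,r)⟩` of a rooted formula and a finite graph with root `r`. -/
noncomputable def stoneGR {V : Type} (fV : Fintype V) (G : SimpleGraph V) {p : ℕ}
    (φ : Language.graph.Formula (Fin (p + 1))) (r : V) : ℝ :=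
  (Nat.card (solSetR G φ r) : ℝ) / (Fintype.card V : ℝ) ^ p

/-- Stone pairing `⟨φ,L⟩` of a formula and a modeling. -/
noncomputable def stoneL {W : Type} [MeasurableSpace W] (L : SimpleGraph W)
    (ν : Measure W) {p : ℕ} (φ : Language.graph.Formula (Fin p)) : ℝ :=
  ((Measure.pi fun _ : Fin p => ν) (solSet L φ)).toReal

/-- Rooted Stone pairing `⟨φ,(L,r)⟩` of a rooted formula and a modeling with root `r`. -/
noncomputable def stoneLR {W : Type} [MeasurableSpace W] (L : SimpleGraph W)
    (ν : Measure W) {p : ℕ} (φ : Language.graph.Formula (Fin (p + 1))) (r : W) : ℝ :=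
  ((Measure.pi fun _ : Fin p => ν) (solSetR L φ r)).toReal

/-- the `m`-th block embedding `Fin p → Fin (k*p)`. -/
def blk (p k : ℕ) (m : Fin k) (i : Fin p) : Fin (k * p) := finProdFinEquiv (m, i)

/-- `TsetK G φ k u` : tuples `v : Fin (k*p) → V` all of whose `k` blocks lie in `solSetR G φ u`. -/
def TsetK {V : Type} (G : SimpleGraph V) {p : ℕ}
    (φ : Language.graph.Formula (Fin (p + 1))) (k : ℕ) (u : V) : Set (Fin (k * p) → V) :=
  {v | ∀ m : Fin k, (v ∘ blk p k m) ∈ solSetR G φ u}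

/-- conjunction over a finset -/
noncomputable def finInf {L : Language} {α β : Type*} {n : ℕ} (s : Finset β)
    (f : β → L.BoundedFormula α n) : L.BoundedFormula α n :=
  BoundedFormula.iInf (fun b : ↥s => f b.1)

/-- body of the formula: `j` root variables, pairwise distinct, each satisfying `ξ` and
all `k` blocks related by `φ` to each root. -/
noncomputable def bodyF {p : ℕ} (ξ : Language.graph.Formula (Fin 1))
    (φ : Language.graph.Formula (Fin (p + 1))) (k j : ℕ) :
    Language.graph.Formula (Fin (k * p) ⊕ Fin j) :=
  (finInf (Finset.univ.filter fun q : Fin j × Fin j => q.1 ≠ q.2)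
      (fun q => ∼(Term.equal (Language.var (Sum.inr q.1)) (Language.var (Sum.inr q.2))))) ⊓
  ((finInf Finset.univ (fun i : Fin j => ξ.relabel (fun _ => Sum.inr i))) ⊓
   (finInf Finset.univ (fun q : Fin k × Fin j =>
      φ.relabel (Fin.snoc (fun l => Sum.inl (blk p k q.1 l)) (Sum.inr q.2)))))

noncomputable def rootFml {p : ℕ} (ξ : Language.graph.Formula (Fin 1))
    (φ : Language.graph.Formula (Fin (p + 1))) (k j : ℕ) :
    Language.graph.Formula (Fin (k * p)) :=
  Formula.iExs (Fin j) (bodyF ξ φ k j)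


lemma realize_iInf_fml {L : Language} {α β : Type*} {M : Type*} [L.Structure M]
    (s : Finset β) (f : β → L.Formula α) (v : α → M) :
    Formula.Realize (finInf s f) v ↔ ∀ b ∈ s, Formula.Realize (f b) v := by
  unfold finInf Formula.Realize
  rw [BoundedFormula.realize_iInf]
  exact ⟨fun h b hb => h ⟨b, hb⟩, fun h b => h b.1 b.2⟩

lemma realize_not_fml {L : Language} {α : Type*} {M : Type*} [L.Structure M]
    (f : L.Formula α) (v : α → M) :
    Formula.Realize (∼f) v ↔ ¬ Formula.Realize f v :=
  Iff.rfl

lemma mem_solSet_rootFml {V : Type} (G : SimpleGraph V) {p : ℕ}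
    (ξ : Language.graph.Formula (Fin 1)) (φ : Language.graph.Formula (Fin (p + 1)))
    (k j : ℕ) (v : Fin (k * p) → V) :
    v ∈ solSet G (rootFml ξ φ k j) ↔
      ∃ w : Fin j → V, Function.Injective w ∧
        ∀ i, w i ∈ sol1 G ξ ∧ v ∈ TsetK G φ k (w i) := by
  letI := G.structure
  show (rootFml ξ φ k j).Realize v ↔ _
  rw [rootFml, Formula.realize_iExs]
  refine exists_congr fun w => ?_
  have hv : (fun a => Sum.elim v w (id a)) = Sum.elim v w := rfl
  rw [bodyF, Formula.realize_inf, Formula.realize_inf]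
  constructor
  · rintro ⟨h1, h2, h3⟩
    rw [realize_iInf_fml] at h1 h2 h3
    refine ⟨fun i i' hii' => ?_, fun i => ⟨?_, fun m => ?_⟩⟩
    · by_contra hne
      have := h1 (i, i') (by simp [hne])
      rw [realize_not_fml] at this
      exact this (by simpa [Formula.realize_equal] using hii')
    · have := h2 i (Finset.mem_univ _)
      rw [Formula.realize_relabel] at this
      exact this
    · have := h3 (m, i) (Finset.mem_univ _)
      rw [Formula.realize_relabel] at this
      have he : (Sum.elim v w) ∘ (Fin.snoc (fun l => Sum.inl (blk p k m l)) (Sum.inr i) :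
          Fin (p+1) → _) = Fin.snoc (v ∘ blk p k m) (w i) := by
        funext l
        refine Fin.lastCases ?_ (fun l' => ?_) l <;> simp [Fin.snoc_castSucc, Fin.snoc_last]
      rwa [he] at this
  · rintro ⟨hinj, h⟩
    refine ⟨?_, ?_, ?_⟩ <;> rw [realize_iInf_fml]
    · rintro ⟨i, i'⟩ hmem
      rw [realize_not_fml]
      intro heq
      rw [Formula.realize_equal] at heq
      simp only [Term.realize_var, Sum.elim_inr] at heq
      have : i = i' := hinj heq
      simp [this] at hmem
    · intro i _
      rw [Formula.realize_relabel]
      exact (h i).1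
    · rintro ⟨m, i⟩ _
      rw [Formula.realize_relabel]
      have he : (Sum.elim v w) ∘ (Fin.snoc (fun l => Sum.inl (blk p k m l)) (Sum.inr i) :
          Fin (p+1) → _) = Fin.snoc (v ∘ blk p k m) (w i) := by
        funext l
        refine Fin.lastCases ?_ (fun l' => ?_) l <;> simp [Fin.snoc_castSucc, Fin.snoc_last]
      rw [he]
      exact (h i).2 m



section Counting
variable {V : Type}

lemma exists_inj_iff {S : Set V} (hS : S.Finite) (j : ℕ) :
    (∃ w : Fin j → V, Function.Injective w ∧ ∀ i, w i ∈ S) ↔ j ≤ Nat.card S := by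
  haveI : Finite S := hS
  haveI : Fintype S := hS.fintype
  constructor
  · rintro ⟨w, hinj, hmem⟩
    have : Function.Injective (fun i : Fin j => (⟨w i, hmem i⟩ : S)) := by
      intro a b hab
      exact hinj (congrArg Subtype.val hab)
    simpa using Nat.card_le_card_of_injective _ this
  · intro h
    rw [Nat.card_eq_fintype_card] at h
    obtain ⟨e⟩ : Nonempty (Fin j ↪ S) := by
      rw [Function.Embedding.nonempty_iff_card_le, Fintype.card_fin]
      exact h
    exact ⟨fun i => (e i).1, fun a b hab => e.injective (Subtype.ext hab),
      fun i => (e i).2⟩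

/-- abstract double counting -/
lemma double_count {A B : Type} [Fintype A] [Fintype B] (P : A → B → Prop)
    [∀ a b, Decidable (P a b)] (t : ℕ) (ht : Fintype.card A ≤ t) :
    ∑ j ∈ Finset.range t,
        (Finset.univ.filter fun b => j + 1 ≤ (Finset.univ.filter fun a => P a b).card).card =
      ∑ a : A, (Finset.univ.filter fun b => P a b).card := by
  have key : ∀ c : ℕ, c ≤ t → ∑ j ∈ Finset.range t, (if j + 1 ≤ c then 1 else 0) = c := by
    intro c hc
    have : (Finset.range t).filter (fun j => j + 1 ≤ c) = Finset.range c := by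
      ext x; simp only [Finset.mem_filter, Finset.mem_range]; omega
    rw [← Finset.card_filter, this, Finset.card_range]
  calc ∑ j ∈ Finset.range t,
        (Finset.univ.filter fun b => j + 1 ≤ (Finset.univ.filter fun a => P a b).card).card
      = ∑ j ∈ Finset.range t, ∑ b : B,
          (if j + 1 ≤ (Finset.univ.filter fun a => P a b).card then 1 else 0) := by
        refine Finset.sum_congr rfl fun j _ => ?_
        rw [Finset.card_filter]
    _ = ∑ b : B, ∑ j ∈ Finset.range t,
          (if j + 1 ≤ (Finset.univ.filter fun a => P a b).card then 1 else 0) :=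
        Finset.sum_comm
    _ = ∑ b : B, (Finset.univ.filter fun a => P a b).card := by
        refine Finset.sum_congr rfl fun b _ => ?_
        exact key _ (le_trans (Finset.card_filter_le _ _) (by simpa using ht))
    _ = ∑ b : B, ∑ a : A, (if P a b then 1 else 0) := by
        refine Finset.sum_congr rfl fun b _ => ?_
        rw [Finset.card_filter]
    _ = ∑ a : A, ∑ b : B, (if P a b then 1 else 0) := Finset.sum_comm
    _ = ∑ a : A, (Finset.univ.filter fun b => P a b).card := by
        refine Finset.sum_congr rfl fun a _ => ?_
        rw [Finset.card_filter]

lemma card_subtype_inter {S : Set V} (Q : V → Prop) :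
    Nat.card {u : V | u ∈ S ∧ Q u} = Nat.card {a : ↥S | Q a.1} := by
  exact Nat.card_congr ⟨fun x => ⟨⟨x.1, x.2.1⟩, x.2.2⟩, fun x => ⟨x.1.1, x.1.2, x.2⟩,
    fun x => rfl, fun x => rfl⟩


/-- the blocks equivalence -/
def blockEquiv {p k : ℕ} (S : Set (Fin p → V)) :
    {v : Fin (k * p) → V | ∀ m : Fin k, (v ∘ blk p k m) ∈ S} ≃ (Fin k → S) where
  toFun v := fun m => ⟨v.1 ∘ blk p k m, v.2 m⟩
  invFun f := ⟨fun x => (f (finProdFinEquiv.symm x).1).1 (finProdFinEquiv.symm x).2, by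
    intro m
    have : ∀ i : Fin p, (finProdFinEquiv.symm (blk p k m i)) = (m, i) := fun i =>
      finProdFinEquiv.symm_apply_apply (m, i)
    convert (f m).2 using 1
    funext i
    simp [Function.comp, this i]⟩
  left_inv := by
    rintro ⟨v, hv⟩
    ext x
    show v (blk p k _ _) = v x
    congr 1
    simp only [blk, Prod.mk.eta, Equiv.apply_symm_apply]
  right_inv := by
    intro f
    funext m
    ext i
    show (f (finProdFinEquiv.symm (blk p k m i)).1).1 (finProdFinEquiv.symm (blk p k m i)).2 = _
    simp [blk, finProdFinEquiv.symm_apply_apply (m, i)]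

lemma card_pow_set {p k : ℕ} (S : Set (Fin p → V)) [Finite V] :
    Nat.card {v : Fin (k * p) → V | ∀ m : Fin k, (v ∘ blk p k m) ∈ S}
      = (Nat.card S) ^ k := by
  rw [Nat.card_congr (blockEquiv S), Nat.card_fun]
  simp
end Counting




lemma blk_val (p k : ℕ) (m : Fin k) (i : Fin p) : (blk p k m i : ℕ) = i + p * m := rfl

lemma measurable_comp_blk {W : Type*} [MeasurableSpace W] (p k : ℕ) (m : Fin k) :
    Measurable (fun v : Fin (k * p) → W => v ∘ blk p k m) :=
  measurable_pi_lambda _ (fun i => measurable_pi_apply _)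

lemma measurableSet_blockSet {W : Type*} [MeasurableSpace W] {p : ℕ} (k : ℕ)
    {S : Set (Fin p → W)} (hS : MeasurableSet S) :
    MeasurableSet {v : Fin (k * p) → W | ∀ m : Fin k, (v ∘ blk p k m) ∈ S} := by
  have : {v : Fin (k * p) → W | ∀ m : Fin k, (v ∘ blk p k m) ∈ S}
      = ⋂ m : Fin k, (fun v : Fin (k*p) → W => v ∘ blk p k m) ⁻¹' S := by
    ext v; simp [Set.mem_iInter]
  rw [this]
  exact MeasurableSet.iInter fun m => (measurable_comp_blk p k m) hS

lemma pi_measure_block_pow {W : Type*} [MeasurableSpace W] (ν : Measure W)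
    [IsProbabilityMeasure ν] {p : ℕ} (S : Set (Fin p → W)) (hS : MeasurableSet S) :
    ∀ k : ℕ, (Measure.pi fun _ : Fin (k * p) => ν)
        {v : Fin (k * p) → W | ∀ m : Fin k, (v ∘ blk p k m) ∈ S}
      = ((Measure.pi fun _ : Fin p => ν) S) ^ k := by
  intro k
  induction k with
  | zero =>
    have : {v : Fin (0 * p) → W | ∀ m : Fin 0, (v ∘ blk p 0 m) ∈ S} = Set.univ := by
      ext v; simp [Fin.forall_fin_zero_pi]
    rw [this, measure_univ, pow_zero]
  | succ k ih =>
    set μp := (Measure.pi fun _ : Fin p => ν)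
    set μk := (Measure.pi fun _ : Fin (k * p) => ν)
    set SETk := {v : Fin (k * p) → W | ∀ m : Fin k, (v ∘ blk p k m) ∈ S} with hSETk
    set SET := {v : Fin ((k+1) * p) → W | ∀ m : Fin (k+1), (v ∘ blk p (k+1) m) ∈ S} with hSET
    have hSETmeas := measurableSet_blockSet (W := W) (k+1) hS
    have hSETkmeas := measurableSet_blockSet (W := W) k hS
    have hpkp : p + k * p = (k+1) * p := by ring
    set e : Fin p ⊕ Fin (k * p) ≃ Fin ((k+1) * p) :=
      finSumFinEquiv.trans (finCongr hpkp) with he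
    have hblk : ∀ (m : Fin (k+1)) (i : Fin p),
        blk p (k+1) m i
          = e (Fin.cases (Sum.inl i) (fun m' => Sum.inr (blk p k m' i)) m) := by
      intro m i
      induction m using Fin.cases with
      | zero =>
        apply Fin.ext
        simp [blk_val, he]
      | succ m' =>
        apply Fin.ext
        simp only [Fin.cases_succ, he, Equiv.trans_apply, finCongr_apply, Fin.coe_cast,
          finSumFinEquiv_apply_right, Fin.coe_natAdd, blk_val, Fin.val_succ]
        ring
    have hmp1 := measurePreserving_piCongrLeft (fun _ : Fin ((k+1) * p) => ν) e
    have hmp2 := measurePreserving_sumPiEquivProdPi (fun _ : Fin p ⊕ Fin (k * p) => ν)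
    have hpre : (MeasurableEquiv.piCongrLeft (fun _ : Fin ((k+1)*p) => W) e) ⁻¹' SET
        = (MeasurableEquiv.sumPiEquivProdPi (fun _ : Fin p ⊕ Fin (k*p) => W)) ⁻¹' (S ×ˢ SETk) := by
      ext h
      simp only [Set.mem_preimage, hSET, Set.mem_setOf_eq, MeasurableEquiv.coe_sumPiEquivProdPi,
        Set.mem_prod]
      have happ : ∀ c, (MeasurableEquiv.piCongrLeft (fun _ : Fin ((k+1)*p) => W) e) h (e c)
          = h c := fun c => MeasurableEquiv.piCongrLeft_apply_apply (β := fun _ => W) e h c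
      have hcomp : ∀ m : Fin (k+1),
          (MeasurableEquiv.piCongrLeft (fun _ : Fin ((k+1)*p) => W) e) h ∘ blk p (k+1) m
            = fun i => h (Fin.cases (Sum.inl i) (fun m' => Sum.inr (blk p k m' i)) m) := by
        intro m
        funext i
        simp only [Function.comp_apply, hblk m i, happ]
      rw [Fin.forall_fin_succ]
      constructor
      · rintro ⟨h0, hs'⟩
        refine ⟨?_, ?_⟩
        · have := h0
          rw [hcomp 0] at this
          simpa using this
        · intro m'
          have := hs' m'
          rw [hcomp m'.succ] at this
          simpa [Function.comp_def] using this
      · rintro ⟨h0, hs'⟩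
        constructor
        · rw [hcomp 0]
          simpa using h0
        · intro m'
          rw [hcomp m'.succ]
          simpa [Function.comp_def] using hs' m'
    calc (Measure.pi fun _ : Fin ((k+1) * p) => ν) SET
        = (Measure.pi fun _ : Fin p ⊕ Fin (k * p) => ν)
            ((MeasurableEquiv.piCongrLeft (fun _ : Fin ((k+1)*p) => W) e) ⁻¹' SET) :=
          (hmp1.measure_preimage hSETmeas.nullMeasurableSet).symm
      _ = (Measure.pi fun _ : Fin p ⊕ Fin (k * p) => ν)
            ((MeasurableEquiv.sumPiEquivProdPi (fun _ : Fin p ⊕ Fin (k*p) => W)) ⁻¹'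
              (S ×ˢ SETk)) := by rw [hpre]
      _ = (μp.prod μk) (S ×ˢ SETk) :=
          hmp2.measure_preimage ((hS.prod hSETkmeas).nullMeasurableSet)
      _ = μp S * μk SETk := by rw [Measure.prod_prod]
      _ = μp S * (μp S) ^ k := by rw [ih]
      _ = (μp S) ^ (k + 1) := (pow_succ' _ _).symm



lemma antitone_eq_of_fibers {t : ℕ} (a b : Fin t → ℝ) (ha : Antitone a) (hb : Antitone b)
    (hfib : ∀ v : ℝ, (Finset.univ.filter fun i => a i = v).card
      = (Finset.univ.filter fun i => b i = v).card) : a = b := by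
  classical
  induction t with
  | zero => funext i; exact i.elim0
  | succ t ih =>
    have h0 : a 0 = b 0 := by
      have h1 : 0 < (Finset.univ.filter fun i => b i = a 0).card := by
        rw [← hfib]; exact Finset.card_pos.mpr ⟨0, by simp⟩
      obtain ⟨i, hi⟩ := Finset.card_pos.mp h1
      have hba : a 0 ≤ b 0 :=
        le_trans (le_of_eq (Finset.mem_filter.mp hi).2.symm) (hb (Fin.zero_le i))
      have h2 : 0 < (Finset.univ.filter fun i => a i = b 0).card := by
        rw [hfib]; exact Finset.card_pos.mpr ⟨0, by simp⟩
      obtain ⟨i', hi'⟩ := Finset.card_pos.mp h2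
      have hab : b 0 ≤ a 0 :=
        le_trans (le_of_eq (Finset.mem_filter.mp hi').2.symm) (ha (Fin.zero_le i'))
      linarith
    have hsum : ∀ (c : Fin (t+1) → ℝ) (v : ℝ), (Finset.univ.filter fun i => c i = v).card
        = (if c 0 = v then 1 else 0) + (Finset.univ.filter fun i : Fin t => c i.succ = v).card := by
      intro c v
      rw [Finset.card_filter, Fin.sum_univ_succ, Finset.card_filter]
    have htail := ih (a ∘ Fin.succ) (b ∘ Fin.succ)
      (fun i j hij => ha (by simpa [Fin.succ_le_succ_iff] using hij))
      (fun i j hij => hb (by simpa [Fin.succ_le_succ_iff] using hij))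
      (fun v => by
        have h := hfib v
        rw [hsum a v, hsum b v, h0] at h
        simp only [Function.comp_apply]
        omega)
    funext i
    induction i using Fin.cases with
    | zero => exact h0
    | succ i => exact congrFun htail i

lemma fib_eq_of_powsum {t : ℕ} (a b : Fin t → ℝ) (ha1 : ∀ i, 1 ≤ a i) (hb1 : ∀ i, 1 ≤ b i)
    (hps : ∀ k : ℕ, ∑ i, a i ^ (k+1) = ∑ i, b i ^ (k+1)) :
    ∀ v : ℝ, (Finset.univ.filter fun i => a i = v).card
      = (Finset.univ.filter fun i => b i = v).card := by
  classical
  set F : Finset ℝ := Finset.univ.image a ∪ Finset.univ.image b with hF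
  set fibA : ℝ → ℕ := fun v => (Finset.univ.filter fun i => a i = v).card
  set fibB : ℝ → ℕ := fun v => (Finset.univ.filter fun i => b i = v).card
  -- fiberwise sums
  have hfiber : ∀ (f : Fin t → ℝ), (∀ i, f i ∈ F) → ∀ K : ℕ,
      ∑ v ∈ F, ((Finset.univ.filter fun i => f i = v).card : ℝ) * v ^ K = ∑ i, f i ^ K := by
    intro f hf K
    rw [← Finset.sum_fiberwise_of_maps_to (g := f) (fun i _ => hf i) (fun i => f i ^ K)]
    refine Finset.sum_congr rfl fun v _ => ?_
    calc ((Finset.univ.filter fun i => f i = v).card : ℝ) * v ^ K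
        = ∑ _i ∈ Finset.univ.filter (fun i => f i = v), v ^ K := by
          rw [Finset.sum_const, nsmul_eq_mul]
      _ = ∑ i ∈ Finset.univ.filter (fun i => f i = v), f i ^ K :=
          Finset.sum_congr rfl fun i hi => by rw [(Finset.mem_filter.mp hi).2]
  have hmemA : ∀ i, a i ∈ F := fun i => Finset.mem_union_left _ (Finset.mem_image_of_mem _ (Finset.mem_univ i))
  have hmemB : ∀ i, b i ∈ F := fun i => Finset.mem_union_right _ (Finset.mem_image_of_mem _ (Finset.mem_univ i))
  have hzero : ∀ K : ℕ, ∑ v ∈ F, ((fibA v : ℝ) - fibB v) * v ^ (K + 1) = 0 := by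
    intro K
    have := hfiber a hmemA (K+1)
    have := hfiber b hmemB (K+1)
    have hps' := hps K
    simp only [sub_mul]
    rw [Finset.sum_sub_distrib]
    rw [hfiber a hmemA (K+1), hfiber b hmemB (K+1), hps K, sub_self]
  -- all values in F are ≥ 1
  have hF1 : ∀ v ∈ F, (1:ℝ) ≤ v := by
    intro v hv
    rcases Finset.mem_union.mp hv with h | h <;>
      obtain ⟨i, _, rfl⟩ := Finset.mem_image.mp h
    · exact ha1 i
    · exact hb1 i
  -- main argument
  intro v
  by_contra hne
  set D : Finset ℝ := F.filter (fun v => fibA v ≠ fibB v) with hD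
  have hDne : D.Nonempty := by
    refine ⟨v, Finset.mem_filter.mpr ⟨?_, hne⟩⟩
    by_cases hva : ∃ i, a i = v
    · obtain ⟨i, rfl⟩ := hva; exact hmemA i
    · by_cases hvb : ∃ i, b i = v
      · obtain ⟨i, rfl⟩ := hvb; exact hmemB i
      · exfalso
        apply hne
        have hA0 : (Finset.univ.filter fun i => a i = v).card = 0 := by
          simp only [Finset.card_eq_zero, Finset.filter_eq_empty_iff]
          intro i _
          exact fun h => hva ⟨i, h⟩
        have hB0 : (Finset.univ.filter fun i => b i = v).card = 0 := by
          simp only [Finset.card_eq_zero, Finset.filter_eq_empty_iff]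
          intro i _
          exact fun h => hvb ⟨i, h⟩
        omega
  set v₁ : ℝ := D.max' hDne with hv₁
  have hv₁D : v₁ ∈ D := D.max'_mem hDne
  have hv₁F : v₁ ∈ F := (Finset.mem_filter.mp hv₁D).1
  have hv₁1 : (1:ℝ) ≤ v₁ := hF1 v₁ hv₁F
  have hv₁pos : (0:ℝ) < v₁ := lt_of_lt_of_le one_pos hv₁1
  have hseq : ∀ K : ℕ, ∑ w ∈ F, ((fibA w : ℝ) - fibB w) * (w / v₁) ^ (K+1) = 0 := by
    intro K
    have h2 : ∀ w ∈ F, ((fibA w:ℝ) - fibB w) * (w / v₁)^(K+1)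
        = (((fibA w:ℝ) - fibB w) * w^(K+1)) / v₁^(K+1) := by
      intro w _
      rw [div_pow]
      ring
    rw [Finset.sum_congr rfl h2, ← Finset.sum_div, hzero K, zero_div]
  have hlimit : Tendsto (fun K : ℕ => ∑ w ∈ F, ((fibA w : ℝ) - fibB w) * (w / v₁) ^ (K+1)) atTop
      (nhds (∑ w ∈ F, if w = v₁ then ((fibA v₁ : ℝ) - fibB v₁) else 0)) := by
    refine tendsto_finset_sum _ fun w hw => ?_
    by_cases hwv : w = v₁
    · simp only [if_pos hwv]
      refine Tendsto.congr (f₁ := fun _ : ℕ => (fibA v₁:ℝ) - fibB v₁) (fun K => ?_)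
        tendsto_const_nhds
      rw [hwv, div_self (ne_of_gt hv₁pos), one_pow, mul_one]
    · simp only [if_neg hwv]
      by_cases hc : (fibA w:ℝ) - fibB w = 0
      · refine Tendsto.congr (f₁ := fun _ : ℕ => (0:ℝ)) (fun K => by rw [hc, zero_mul])
          tendsto_const_nhds
      · have hwD : w ∈ D := Finset.mem_filter.mpr ⟨hw, fun h => hc (by rw [h, sub_self])⟩
        have hwlt : w < v₁ := lt_of_le_of_ne (D.le_max' w hwD) hwv
        have h0le : 0 ≤ w / v₁ := div_nonneg (le_trans zero_le_one (hF1 w hw)) (le_of_lt hv₁pos)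
        have hlt1 : w / v₁ < 1 := (div_lt_one hv₁pos).mpr hwlt
        have hpow := tendsto_pow_atTop_nhds_zero_of_lt_one h0le hlt1
        have hpow1 : Tendsto (fun K : ℕ => (w / v₁)^(K+1)) atTop (nhds 0) :=
          hpow.comp (tendsto_add_atTop_nat 1)
        simpa using hpow1.const_mul ((fibA w:ℝ) - fibB w)
  have hconst : (fun K : ℕ => ∑ w ∈ F, ((fibA w : ℝ) - fibB w) * (w / v₁) ^ (K+1))
      = fun _ => (0:ℝ) := funext hseq
  rw [hconst] at hlimit
  have hsum0 : (∑ w ∈ F, if w = v₁ then ((fibA v₁:ℝ) - fibB v₁) else 0) = 0 :=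
    (tendsto_nhds_unique tendsto_const_nhds hlimit).symm
  rw [Finset.sum_ite_eq' F v₁ (fun _ => ((fibA v₁:ℝ) - fibB v₁)), if_pos hv₁F] at hsum0
  have : fibA v₁ = fibB v₁ := by
    have := sub_eq_zero.mp hsum0
    exact_mod_cast this
  exact (Finset.mem_filter.mp hv₁D).2 this

lemma shifted_powsum {t : ℕ} (a b : Fin t → ℝ)
    (hps : ∀ k : ℕ, ∑ i, a i ^ (k+1) = ∑ i, b i ^ (k+1)) :
    ∀ k : ℕ, ∑ i, (a i + 1) ^ (k+1) = ∑ i, (b i + 1) ^ (k+1) := by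
  intro k
  have expand : ∀ f : Fin t → ℝ, ∑ i, (f i + 1) ^ (k+1)
      = ∑ m ∈ Finset.range (k+2), (∑ i, f i ^ m) * ((k+1).choose m : ℝ) := by
    intro f
    have h1 : ∀ i, (f i + 1) ^ (k+1)
        = ∑ m ∈ Finset.range (k+2), f i ^ m * ((k+1).choose m : ℝ) := by
      intro i
      rw [add_pow]
      exact Finset.sum_congr rfl fun m _ => by rw [one_pow, mul_one]
    rw [Finset.sum_congr rfl fun i _ => h1 i, Finset.sum_comm]
    exact Finset.sum_congr rfl fun m _ => by rw [← Finset.sum_mul]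
  rw [expand a, expand b]
  refine Finset.sum_congr rfl fun m _ => ?_
  match m with
  | 0 => simp
  | (m' + 1) => rw [hps m']

lemma antitone_powsum_unique {t : ℕ} (a b : Fin t → ℝ) (ha : Antitone a) (hb : Antitone b)
    (ha0 : ∀ i, 0 ≤ a i) (hb0 : ∀ i, 0 ≤ b i)
    (hps : ∀ k : ℕ, ∑ i, a i ^ (k+1) = ∑ i, b i ^ (k+1)) : a = b := by
  have key := fib_eq_of_powsum (fun i => a i + 1) (fun i => b i + 1)
    (fun i => by have := ha0 i; linarith) (fun i => by have := hb0 i; linarith)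
    (shifted_powsum a b hps)
  have heq : (fun i => a i + 1) = (fun i => b i + 1) :=
    antitone_eq_of_fibers _ _ (fun i j hij => by simpa using ha hij)
      (fun i j hij => by simpa using hb hij) key
  funext i
  have := congrFun heq i
  simpa using this


lemma nat_card_setOf {B : Type} [Fintype B] (p : B → Prop) [DecidablePred p] :
    Nat.card {b | p b} = (Finset.univ.filter p).card := by
  rw [Nat.card_eq_fintype_card]
  exact Fintype.card_subtype p

lemma double_count₂ {A B : Type} [Fintype A] [Fintype B] (P : A → B → Prop) (t : ℕ)
    (ht : Fintype.card A ≤ t) :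
    ∑ j ∈ Finset.range t, Nat.card {b | j + 1 ≤ Nat.card {a | P a b}}
      = ∑ a : A, Nat.card {b | P a b} := by
  classical
  simp only [nat_card_setOf]
  exact double_count P t ht

lemma mem_solSet_rootFml_card {V : Type} (G : SimpleGraph V) {p : ℕ}
    (ξ : Language.graph.Formula (Fin 1)) (φ : Language.graph.Formula (Fin (p + 1)))
    (hξ : (sol1 G ξ).Finite) (k j : ℕ) (v : Fin (k * p) → V) :
    v ∈ solSet G (rootFml ξ φ k j) ↔
      j ≤ Nat.card {u : V | u ∈ sol1 G ξ ∧ v ∈ TsetK G φ k u} := by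
  rw [mem_solSet_rootFml]
  exact exists_inj_iff (S := {u : V | u ∈ sol1 G ξ ∧ v ∈ TsetK G φ k u})
    (hξ.subset (fun u (hu : u ∈ sol1 G ξ ∧ v ∈ TsetK G φ k u) => hu.1)) j

lemma solSet_rootFml_eq {V : Type} (G : SimpleGraph V) {p : ℕ}
    (ξ : Language.graph.Formula (Fin 1)) (φ : Language.graph.Formula (Fin (p + 1)))
    (hξ : (sol1 G ξ).Finite) (k j : ℕ) :
    solSet G (rootFml ξ φ k j)
      = {v : Fin (k * p) → V |
          j ≤ Nat.card {u : ↥(sol1 G ξ) | v ∈ TsetK G φ k u.1}} := by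
  ext v
  rw [mem_solSet_rootFml_card G ξ φ hξ k j v]
  rw [card_subtype_inter (S := sol1 G ξ) (fun u => v ∈ TsetK G φ k u)]
  rfl

lemma Gside {V : Type} (fV : Fintype V) (G : SimpleGraph V) {p : ℕ}
    (ξ : Language.graph.Formula (Fin 1)) (φ : Language.graph.Formula (Fin (p + 1)))
    (t k : ℕ) (hcard : Nat.card (sol1 G ξ) = t) (g : Fin t ≃ ↥(sol1 G ξ)) :
    ∑ j ∈ Finset.range t, stoneG fV G (rootFml ξ φ k (j+1))
      = ∑ i : Fin t, (stoneGR fV G φ (g i).1) ^ k := by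
  classical
  haveI : Finite V := Finite.of_fintype V
  haveI : Fintype ↥(sol1 G ξ) := Fintype.ofFinite _
  have hA : Fintype.card ↥(sol1 G ξ) ≤ t := le_of_eq (by rw [← Nat.card_eq_fintype_card, hcard])
  have hnat : ∑ j ∈ Finset.range t, Nat.card (solSet G (rootFml ξ φ k (j+1)))
      = ∑ u : ↥(sol1 G ξ), (Nat.card (solSetR G φ u.1)) ^ k := by
    calc ∑ j ∈ Finset.range t, Nat.card (solSet G (rootFml ξ φ k (j+1)))
        = ∑ j ∈ Finset.range t,
            Nat.card {v : Fin (k*p) → V |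
              j + 1 ≤ Nat.card {u : ↥(sol1 G ξ) | v ∈ TsetK G φ k u.1}} := by
          refine Finset.sum_congr rfl fun j _ => ?_
          rw [solSet_rootFml_eq G ξ φ (Set.toFinite _) k (j+1)]
      _ = ∑ u : ↥(sol1 G ξ), Nat.card {v : Fin (k*p) → V | v ∈ TsetK G φ k u.1} :=
          double_count₂ (fun (u : ↥(sol1 G ξ)) (v : Fin (k*p) → V) => v ∈ TsetK G φ k u.1) t hA
      _ = ∑ u : ↥(sol1 G ξ), (Nat.card (solSetR G φ u.1)) ^ k := by
          refine Finset.sum_congr rfl fun u _ => ?_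
          rw [Set.setOf_mem_eq]
          exact card_pow_set (solSetR G φ u.1)
  have hexp : ((Fintype.card V : ℝ)) ^ (k * p) = (((Fintype.card V : ℝ)) ^ p) ^ k := by
    rw [← pow_mul, Nat.mul_comm]
  calc ∑ j ∈ Finset.range t, stoneG fV G (rootFml ξ φ k (j+1))
      = (∑ j ∈ Finset.range t, (Nat.card (solSet G (rootFml ξ φ k (j+1))) : ℝ))
          / ((Fintype.card V : ℝ)) ^ (k * p) := by
        rw [Finset.sum_div]
        rfl
    _ = (∑ u : ↥(sol1 G ξ), ((Nat.card (solSetR G φ u.1) : ℝ)) ^ k)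
          / ((Fintype.card V : ℝ)) ^ (k * p) := by
        congr 1
        exact_mod_cast congrArg (Nat.cast (R := ℝ)) hnat
    _ = ∑ u : ↥(sol1 G ξ), (stoneGR fV G φ u.1) ^ k := by
        rw [Finset.sum_div]
        refine Finset.sum_congr rfl fun u _ => ?_
        rw [hexp, stoneGR, div_pow]
    _ = ∑ i : Fin t, (stoneGR fV G φ (g i).1) ^ k :=
        (Equiv.sum_comp g (fun u => (stoneGR fV G φ u.1) ^ k)).symm

lemma measurable_snocmap {W : Type} [MeasurableSpace W] (p : ℕ) (u : W) :
    Measurable (fun v : Fin p → W => (Fin.snoc v u : Fin (p+1) → W)) := by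
  apply measurable_pi_lambda
  intro j
  induction j using Fin.lastCases with
  | last => simpa [Fin.snoc_last] using measurable_const
  | cast i => simpa [Fin.snoc_castSucc] using measurable_pi_apply i

lemma Lside {W : Type} [MeasurableSpace W] (L : SimpleGraph W) (ν : Measure W)
    [IsProbabilityMeasure ν] {p : ℕ}
    (hmeas : ∀ (q : ℕ) (ψ : Language.graph.Formula (Fin q)), MeasurableSet (solSet L ψ))
    (ξ : Language.graph.Formula (Fin 1)) (φ : Language.graph.Formula (Fin (p + 1)))
    (hfin : (sol1 L ξ).Finite) (t k : ℕ) (hcard : Nat.card (sol1 L ξ) = t)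
    (g : Fin t ≃ ↥(sol1 L ξ)) :
    ∑ j ∈ Finset.range t, stoneL L ν (rootFml ξ φ k (j+1))
      = ∑ i : Fin t, (stoneLR L ν φ (g i).1) ^ k := by
  classical
  haveI : Fintype ↥(sol1 L ξ) := hfin.fintype
  set μK := Measure.pi (fun _ : Fin (k * p) => ν) with hμK
  set μp := Measure.pi (fun _ : Fin p => ν) with hμp
  -- measurability of solSetR and TsetK
  have hmR : ∀ u : W, MeasurableSet (solSetR L φ u) := by
    intro u
    have : solSetR L φ u = (fun v : Fin p → W => (Fin.snoc v u : Fin (p+1) → W)) ⁻¹'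
        (solSet L φ) := rfl
    rw [this]
    exact (measurable_snocmap p u) (hmeas (p+1) φ)
  have hmT : ∀ u : W, MeasurableSet (TsetK L φ k u) :=
    fun u => measurableSet_blockSet k (hmR u)
  -- the count function
  set c : (Fin (k * p) → W) → ℕ :=
    fun v => Nat.card {u : ↥(sol1 L ξ) | v ∈ TsetK L φ k u.1} with hc
  have hct : ∀ v, c v ≤ t := by
    intro v
    haveI : Finite ↥(sol1 L ξ) := hfin.to_subtype
    have h1 : Nat.card {u : ↥(sol1 L ξ) | v ∈ TsetK L φ k u.1} ≤ Nat.card ↥(sol1 L ξ) :=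
      Nat.card_le_card_of_injective (Subtype.val) Subtype.val_injective
    exact le_trans h1 (le_of_eq hcard)
  have hcfib : ∀ v, (c v : ℝ≥0∞)
      = ∑ u : ↥(sol1 L ξ), (if v ∈ TsetK L φ k u.1 then (1:ℝ≥0∞) else 0) := by
    intro v
    have e : c v = (Finset.univ.filter (fun u : ↥(sol1 L ξ) => v ∈ TsetK L φ k u.1)).card :=
      nat_card_setOf (fun u : ↥(sol1 L ξ) => v ∈ TsetK L φ k u.1)
    rw [e, Finset.card_filter]
    push_cast
    rfl
  have hsolmem : ∀ (j : ℕ) v, v ∈ solSet L (rootFml ξ φ k (j+1)) ↔ j + 1 ≤ c v := by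
    intro j v
    rw [solSet_rootFml_eq L ξ φ hfin k (j+1)]
    exact Iff.rfl
  have hclayer : ∀ v, (c v : ℝ≥0∞)
      = ∑ j ∈ Finset.range t, (if v ∈ solSet L (rootFml ξ φ k (j+1)) then (1:ℝ≥0∞) else 0) := by
    intro v
    have h1 : ∀ j ∈ Finset.range t, (if v ∈ solSet L (rootFml ξ φ k (j+1)) then (1:ℝ≥0∞) else 0)
        = (if j + 1 ≤ c v then (1:ℝ≥0∞) else 0) := by
      intro j _
      rw [if_congr (hsolmem j v) rfl rfl]
    rw [Finset.sum_congr rfl h1]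
    have h2 : (Finset.range t).filter (fun j => j + 1 ≤ c v) = Finset.range (c v) := by
      ext x
      simp only [Finset.mem_filter, Finset.mem_range]
      have := hct v
      omega
    rw [← Finset.sum_filter, h2, Finset.sum_const, Finset.card_range, nsmul_eq_mul, mul_one]
  haveI : IsProbabilityMeasure μK := by rw [hμK]; infer_instance
  haveI : IsProbabilityMeasure μp := by rw [hμp]; infer_instance
  have h2 : ∀ u : W, (∫⁻ v, (if v ∈ TsetK L φ k u then (1:ℝ≥0∞) else 0) ∂μK)
      = μK (TsetK L φ k u) := by
    intro u
    rw [← lintegral_indicator_one (hmT u)]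
    simp only [Set.indicator_apply, Pi.one_apply]
  have key : ∑ j ∈ Finset.range t, μK (solSet L (rootFml ξ φ k (j+1)))
      = ∑ u : ↥(sol1 L ξ), μK (TsetK L φ k u.1) := by
    have h1 : ∀ j ∈ Finset.range t, μK (solSet L (rootFml ξ φ k (j+1)))
        = ∫⁻ v, (if v ∈ solSet L (rootFml ξ φ k (j+1)) then (1:ℝ≥0∞) else 0) ∂μK := by
      intro j _
      rw [← lintegral_indicator_one (hmeas _ _)]
      simp only [Set.indicator_apply, Pi.one_apply]
    rw [Finset.sum_congr rfl h1, ← lintegral_finset_sum]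
    · have e1 : (fun v => ∑ j ∈ Finset.range t,
          (if v ∈ solSet L (rootFml ξ φ k (j+1)) then (1:ℝ≥0∞) else 0))
          = fun v => (c v : ℝ≥0∞) := funext fun v => (hclayer v).symm
      rw [e1]
      have e2 : (fun v => (c v : ℝ≥0∞)) = fun v =>
          ∑ u : ↥(sol1 L ξ), (if v ∈ TsetK L φ k u.1 then (1:ℝ≥0∞) else 0) :=
        funext hcfib
      rw [e2, lintegral_finset_sum]
      · exact Finset.sum_congr rfl fun u _ => h2 u.1
      · exact fun u _ => Measurable.ite (hmT u.1) measurable_const measurable_const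
    · exact fun j _ => Measurable.ite (hmeas _ _) measurable_const measurable_const
  calc ∑ j ∈ Finset.range t, stoneL L ν (rootFml ξ φ k (j+1))
      = (∑ j ∈ Finset.range t, μK (solSet L (rootFml ξ φ k (j+1)))).toReal := by
        rw [ENNReal.toReal_sum (fun j _ => measure_ne_top μK _)]
        rfl
    _ = (∑ u : ↥(sol1 L ξ), μK (TsetK L φ k u.1)).toReal := by rw [key]
    _ = ∑ u : ↥(sol1 L ξ), (μK (TsetK L φ k u.1)).toReal :=
        ENNReal.toReal_sum (fun u _ => measure_ne_top μK _)
    _ = ∑ u : ↥(sol1 L ξ), (stoneLR L ν φ u.1) ^ k := by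
        refine Finset.sum_congr rfl fun u _ => ?_
        rw [show μK (TsetK L φ k u.1) = (μp (solSetR L φ u.1)) ^ k from
          pi_measure_block_pow ν (solSetR L φ u.1) (hmR u.1) k]
        rw [ENNReal.toReal_pow]
        rfl
    _ = ∑ i : Fin t, (stoneLR L ν φ (g i).1) ^ k :=
        (Equiv.sum_comp g (fun u => (stoneLR L ν φ u.1) ^ k)).symm

lemma stoneGR_mem_Icc {V : Type} (fV : Fintype V) (hne : Nonempty V) (G : SimpleGraph V)
    {p : ℕ} (φ : Language.graph.Formula (Fin (p + 1))) (r : V) :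
    stoneGR fV G φ r ∈ Set.Icc (0:ℝ) 1 := by
  haveI : Finite V := Finite.of_fintype V
  have hpos : (0:ℝ) < (Fintype.card V : ℝ) ^ p := by
    have : 0 < Fintype.card V := Fintype.card_pos
    positivity
  constructor
  · exact div_nonneg (Nat.cast_nonneg _) (le_of_lt hpos)
  · rw [stoneGR, div_le_one hpos]
    have h1 : Nat.card (solSetR G φ r) ≤ Nat.card (Fin p → V) :=
      Nat.card_le_card_of_injective Subtype.val Subtype.val_injective
    have h2 : Nat.card (Fin p → V) = Fintype.card V ^ p := by
      rw [Nat.card_fun, Nat.card_eq_fintype_card, Nat.card_eq_fintype_card, Fintype.card_fin]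
    have := le_trans h1 (le_of_eq h2)
    exact_mod_cast this

/-- Under the standing assumptions, with `t = |ξ(L)|`, the non-increasing
rearrangement of the vector `(⟨φ,(Gₙ,u)⟩)_{u ∈ ξ(Gₙ)}` converges coordinatewise to the
non-increasing rearrangement of `(⟨φ,(L,u)⟩)_{u ∈ ξ(L)}`. -/
theorem rearranged_root_values_converge

    (V : ℕ → Type) (fV : ∀ n, Fintype (V n)) (hVne : ∀ n, Nonempty (V n))
    (G : ∀ n, SimpleGraph (V n))
    (W : Type) [MeasurableSpace W] [StandardBorelSpace W]
    (L : SimpleGraph W) (ν : Measure W) [IsProbabilityMeasure ν]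
    (hmeas : ∀ (p : ℕ) (φ : Language.graph.Formula (Fin p)), MeasurableSet (solSet L φ))
    (hFOconv : ∀ (p : ℕ) (φ : Language.graph.Formula (Fin p)),
      ∃ c : ℝ, Tendsto (fun n => stoneG (fV n) (G n) φ) atTop (nhds c))
    (hlim : ∀ (p : ℕ) (φ : Language.graph.Formula (Fin p)),
      Tendsto (fun n => stoneG (fV n) (G n) φ) atTop (nhds (stoneL L ν φ)))
    (ξ : Language.graph.Formula (Fin 1))
    (hfin : (sol1 L ξ).Finite) (hnonempty : (sol1 L ξ).Nonempty)
    (hmin : ∀ ψ : Language.graph.Formula (Fin 1),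
      sol1 L ψ ⊆ sol1 L ξ → sol1 L ψ = ∅ ∨ sol1 L ψ = sol1 L ξ)
    (hcard : ∀ n, Nat.card (sol1 (G n) ξ) = Nat.card (sol1 L ξ))
    (t : ℕ) (ht : t = Nat.card (sol1 L ξ))
    (p : ℕ) (hp : 1 ≤ p) (φ : Language.graph.Formula (Fin (p + 1)))
    (sn : ℕ → Fin t → ℝ) (s : Fin t → ℝ)
    (hsn : ∀ n, Antitone (sn n) ∧
      ∃ g : Fin t ≃ (sol1 (G n) ξ), ∀ i, sn n i = stoneGR (fV n) (G n) φ (g i).1)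
    (hs : Antitone s ∧ ∃ g : Fin t ≃ (sol1 L ξ), ∀ i, s i = stoneLR L ν φ (g i).1) :
    ∀ i : Fin t, Tendsto (fun n => sn n i) atTop (nhds (s i)) := by
  obtain ⟨hs_anti, gs, hgs⟩ := hs
  -- power sums convergence
  have hPS : ∀ k : ℕ, Tendsto (fun n => ∑ i, (sn n i) ^ (k+1)) atTop
      (nhds (∑ i, (s i) ^ (k+1))) := by
    intro k
    have hG : ∀ n, ∑ i, (sn n i) ^ (k+1)
        = ∑ j ∈ Finset.range t, stoneG (fV n) (G n) (rootFml ξ φ (k+1) (j+1)) := by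
      intro n
      obtain ⟨-, g, hg⟩ := hsn n
      rw [Gside (fV n) (G n) ξ φ t (k+1) ((hcard n).trans ht.symm) g]
      exact Finset.sum_congr rfl fun i _ => by rw [hg i]
    have hLs : ∑ i, (s i) ^ (k+1)
        = ∑ j ∈ Finset.range t, stoneL L ν (rootFml ξ φ (k+1) (j+1)) := by
      rw [Lside L ν hmeas ξ φ hfin t (k+1) ht.symm gs]
      exact Finset.sum_congr rfl fun i _ => by rw [hgs i]
    rw [hLs]
    refine Tendsto.congr (fun n => (hG n).symm) ?_
    exact tendsto_finset_sum _ (fun j _ => hlim _ (rootFml ξ φ (k+1) (j+1)))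
  -- bounds
  have hsn01 : ∀ n i, sn n i ∈ Set.Icc (0:ℝ) 1 := by
    intro n i
    obtain ⟨-, g, hg⟩ := hsn n
    rw [hg i]
    exact stoneGR_mem_Icc (fV n) (hVne n) (G n) φ (g i).1
  have hs0 : ∀ i, 0 ≤ s i := by
    intro i
    rw [hgs i]
    exact ENNReal.toReal_nonneg
  -- compactness endgame
  have main : Tendsto (fun n => sn n) atTop (nhds s) := by
    apply tendsto_of_subseq_tendsto
    intro ns hns
    have hK : IsCompact (Set.Icc (0 : Fin t → ℝ) 1) := isCompact_Icc
    have hmem : ∀ m, sn (ns m) ∈ Set.Icc (0 : Fin t → ℝ) 1 := by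
      intro m
      constructor
      · intro i
        exact (hsn01 _ i).1
      · intro i
        exact (hsn01 _ i).2
    obtain ⟨y, hyK, ms, hms, hconv⟩ := hK.tendsto_subseq hmem
    refine ⟨ms, ?_⟩
    have hproj : ∀ i : Fin t, Tendsto (fun m => sn (ns (ms m)) i) atTop (nhds (y i)) :=
      fun i => ((continuous_apply i).continuousAt.tendsto).comp hconv
    have hyanti : Antitone y := by
      intro i j hij
      exact le_of_tendsto_of_tendsto' (hproj j) (hproj i)
        (fun m => (hsn (ns (ms m))).1 hij)
    have hy0 : ∀ i, 0 ≤ y i := fun i => hyK.1 i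
    have hypow : ∀ k, ∑ i, (y i) ^ (k+1) = ∑ i, (s i) ^ (k+1) := by
      intro k
      have t1 : Tendsto (fun m => ∑ i, (sn (ns (ms m)) i) ^ (k+1)) atTop
          (nhds (∑ i, (y i) ^ (k+1))) :=
        tendsto_finset_sum _ fun i _ => (hproj i).pow (k+1)
      have t2 : Tendsto (fun m => ∑ i, (sn (ns (ms m)) i) ^ (k+1)) atTop
          (nhds (∑ i, (s i) ^ (k+1))) :=
        (hPS k).comp (hns.comp hms.tendsto_atTop)
      exact tendsto_nhds_unique t1 t2
    have hy : y = s := antitone_powsum_unique y s hyanti hs_anti hy0 hs0 hypow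
    rwa [hy] at hconv
  intro i
  exact ((continuous_apply i).continuousAt.tendsto).comp main
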